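/- Let ξ ∈ ℝ³ and f ∈ L¹(ℝ³; ℂ), and define g(t) = ∫_{ℝ³} f(p) e^{−2πi(ξ·v(p))t} d³p. Then for every Schwartz function ψ : ℝ → ℂ whose Fourier transform ψ̂(ω) = ∫_ℝ ψ(t) e^{−2πiωt} dt vanishes for all ω with |ω| ≤ |ξ|, one has ∫_ℝ g(t) ψ(t) dt = 0. (Equivalently, the distributional Fourier transform of g in t is supported in the interval [−|ξ|, |ξ|]: a consequence of the universal relativistic speed limit |v(p)| < 1.) -/

import Mathlib

open MeasureTheory Real

/-- The relativistic velocity `v(p) = p / √(1+|p|²)` (units with `c = m = 1`). -/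
noncomputable def relVel (p : EuclideanSpace ℝ (Fin 3)) : EuclideanSpace ℝ (Fin 3) :=
  (Real.sqrt (1 + ‖p‖ ^ 2))⁻¹ • p

/-- The distributional Fourier transform in `t` of a mode function
`g(t) = ∫ f(p) e^{-2πi (ξ·v(p)) t} dp` is supported in `[-|ξ|, |ξ|]`: pairing `g` against
any Schwartz function whose Fourier transform vanishes on `{|ω| ≤ |ξ|}` gives zero. -/
theorem mode_fourier_transform_supported_in_ball
    (ξ : EuclideanSpace ℝ (Fin 3))
    (f : EuclideanSpace ℝ (Fin 3) → ℂ) (hf : Integrable f)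
    (g : ℝ → ℂ)
    (hg : ∀ t : ℝ, g t =
      ∫ p : EuclideanSpace ℝ (Fin 3),
        f p * Complex.exp (-2 * (Real.pi : ℂ) * Complex.I *
          ((inner ℝ ξ (relVel p) : ℝ) : ℂ) * (t : ℂ)))
    (ψ : SchwartzMap ℝ ℂ)
    (hψ : ∀ ω : ℝ, |ω| ≤ ‖ξ‖ →
      (∫ t : ℝ, ψ t * Complex.exp (-2 * (Real.pi : ℂ) * Complex.I * (ω : ℂ) * (t : ℂ))) = 0) :
    (∫ t : ℝ, g t * ψ t) = 0 := by
  set ω : EuclideanSpace ℝ (Fin 3) → ℝ := fun p => (inner ℝ ξ (relVel p) : ℝ) with hωdef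
  have hω : ∀ p, |ω p| ≤ ‖ξ‖ := by
    intro p
    have h1 : |ω p| ≤ ‖ξ‖ * ‖relVel p‖ := abs_real_inner_le_norm ξ (relVel p)
    have h2 : ‖relVel p‖ ≤ 1 := by
      rw [relVel, norm_smul, Real.norm_eq_abs,
        abs_of_nonneg (inv_nonneg.2 (Real.sqrt_nonneg _))]
      have hpos : 0 < Real.sqrt (1 + ‖p‖ ^ 2) := Real.sqrt_pos.2 (by positivity)
      rw [inv_mul_le_iff₀ hpos, mul_one]
      calc ‖p‖ = Real.sqrt (‖p‖ ^ 2) := (Real.sqrt_sq (norm_nonneg _)).symm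
        _ ≤ Real.sqrt (1 + ‖p‖ ^ 2) := Real.sqrt_le_sqrt (by linarith)
    have := mul_le_mul_of_nonneg_left h2 (norm_nonneg ξ)
    nlinarith [norm_nonneg ξ]
  have hωcont : Continuous ω := by
    apply continuous_const.inner
    unfold relVel
    exact Continuous.smul
      ((Real.continuous_sqrt.comp (by continuity)).inv₀
        (fun p => ne_of_gt (Real.sqrt_pos.2 (by positivity)))) continuous_id
  set e : ℝ → EuclideanSpace ℝ (Fin 3) → ℂ := fun t p =>
    Complex.exp (-2 * (Real.pi : ℂ) * Complex.I * ((ω p : ℝ) : ℂ) * (t : ℂ)) with hedef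
  have hecont : Continuous fun z : ℝ × EuclideanSpace ℝ (Fin 3) => e z.1 z.2 := by
    apply Complex.continuous_exp.comp
    apply Continuous.mul _ (Complex.continuous_ofReal.comp continuous_fst)
    exact Continuous.mul continuous_const
      ((Complex.continuous_ofReal.comp (hωcont.comp continuous_snd)))
  have henorm : ∀ t p, ‖e t p‖ = 1 := by
    intro t p
    rw [hedef]
    simp [Complex.norm_exp]
  have hG : Integrable (fun z : ℝ × EuclideanSpace ℝ (Fin 3) => ψ z.1 * f z.2) := Integrable.mul_prod ψ.integrable hf
  have hFmeas : AEStronglyMeasurable (fun z : ℝ × EuclideanSpace ℝ (Fin 3) => f z.2 * e z.1 z.2 * ψ z.1)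
      (volume.prod volume) := by
    have : (fun z : ℝ × EuclideanSpace ℝ (Fin 3) => f z.2 * e z.1 z.2 * ψ z.1)
        = fun z : ℝ × EuclideanSpace ℝ (Fin 3) => (ψ z.1 * f z.2) * e z.1 z.2 := by ext z; ring
    rw [this]
    exact hG.1.mul hecont.aestronglyMeasurable
  have hF : Integrable (fun z : ℝ × EuclideanSpace ℝ (Fin 3) => f z.2 * e z.1 z.2 * ψ z.1) (volume.prod volume) := by
    refine hG.norm.mono' hFmeas (Filter.Eventually.of_forall fun z => ?_)
    rw [norm_mul, norm_mul, henorm, mul_one, norm_mul, mul_comm]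
  have hzero : ∀ p : EuclideanSpace ℝ (Fin 3), (∫ t : ℝ, f p * e t p * ψ t) = 0 := by
    intro p
    have h : (fun t => f p * e t p * ψ t) = fun t => f p * (ψ t * e t p) := by
      ext t; ring
    rw [h, integral_const_mul, hψ (ω p) (hω p), mul_zero]
  calc (∫ t : ℝ, g t * ψ t) = ∫ t : ℝ, ∫ p : EuclideanSpace ℝ (Fin 3), f p * e t p * ψ t := by
        congr 1; ext t
        rw [hg t, ← integral_mul_const]
    _ = ∫ p : EuclideanSpace ℝ (Fin 3), ∫ t : ℝ, f p * e t p * ψ t := integral_integral_swap hF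
    _ = 0 := by simp [hzero]
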